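/- For every n ≥ 1, every attractor of the string S_n has size at least ⌊log₂ n⌋/2; that is, γ(S_n) ≥ ⌊log₂ n⌋/2. -/

import Mathlib

/-- `Γ` is an attractor of `S`: every nonempty substring `S[i..j]` (1-based) has an
occurrence `S[i'..j']` covering a position of `Γ`. -/
def IsAttractor {α : Type} (S : List α) (Γ : Finset ℕ) : Prop :=
  (∀ p ∈ Γ, 1 ≤ p ∧ p ≤ S.length) ∧
  ∀ i j : ℕ, 1 ≤ i → i ≤ j → j ≤ S.length →
    ∃ i' j' : ℕ, 1 ≤ i' ∧ i' ≤ j' ∧ j' ≤ S.length ∧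
      (S.drop (i' - 1)).take (j' - i' + 1) = (S.drop (i - 1)).take (j - i + 1) ∧
      ∃ p ∈ Γ, i' ≤ p ∧ p ≤ j'

/-- `γ(S)`: the minimum size of an attractor of `S`. -/
noncomputable def gamma {α : Type} (S : List α) : ℕ :=
  sInf { m | ∃ Γ : Finset ℕ, IsAttractor S Γ ∧ Γ.card = m }

/-- `Sn n`: the length-`n` prefix of the infinite string `S_∞` over `{a, b}`
(`a = false`, `b = true`) whose `i`-th character (1-based) is `b` iff `i` is a power of 2. -/
def Sn (n : ℕ) : List Bool :=
  (List.range n).map (fun i => (List.range (i + 2)).any (fun j => i + 1 == 2 ^ j))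

lemma Sn_length (n : ℕ) : (Sn n).length = n := by simp [Sn]

lemma Sn_getElem?_true_iff (n i : ℕ) (h : i < n) :
    (Sn n)[i]? = some true ↔ ∃ j, i + 1 = 2 ^ j := by
  rw [List.getElem?_eq_getElem (by rw [Sn_length]; exact h)]
  simp only [Sn, List.getElem_map, List.getElem_range, Option.some_inj]
  rw [List.any_eq_true]
  constructor
  · rintro ⟨j, -, hj⟩
    exact ⟨j, by simpa using hj⟩
  · rintro ⟨j, hj⟩
    refine ⟨j, List.mem_range.mpr ?_, by simpa using hj⟩
    have := Nat.lt_two_pow_self (n := j)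
    omega

lemma pow_eq_of_add (s k t : ℕ) (h : 2 ^ s + 2 ^ k = 2 ^ t) : s = k := by
  by_contra hne
  wlog hsk : s < k generalizing s k
  · exact this k s (by omega) (Ne.symm hne) (by omega)
  have hst : s < t := by
    have h2 : (2:ℕ) ^ s < 2 ^ t := by
      have := Nat.one_le_two_pow (n := k); omega
    exact (Nat.pow_lt_pow_iff_right (by norm_num)).mp h2
  have h1 : 2 ^ s * 2 ^ (t - s) = 2 ^ s * (1 + 2 ^ (k - s)) := by
    rw [← pow_add, Nat.mul_add, ← pow_add, mul_one]
    have e1 : s + (t - s) = t := by omega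
    have e2 : s + (k - s) = k := by omega
    rw [e1, e2]; omega
  have h2 : 2 ^ (t - s) = 1 + 2 ^ (k - s) :=
    Nat.eq_of_mul_eq_mul_left (by positivity) h1
  have d1 : 2 ∣ 2 ^ (t - s) := dvd_pow_self 2 (by omega)
  have d2 : 2 ∣ 2 ^ (k - s) := dvd_pow_self 2 (by omega)
  omega

/-- Uniqueness of the occurrence of the pattern `S[2^k .. 2^(k+1)]`. -/
lemma occ_unique (n k i' j' : ℕ) (hkn : 2 ^ (k + 1) ≤ n)
    (h1 : 1 ≤ i') (h2 : i' ≤ j') (h3 : j' ≤ n)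
    (heq : ((Sn n).drop (i' - 1)).take (j' - i' + 1)
         = ((Sn n).drop (2 ^ k - 1)).take (2 ^ (k + 1) - 2 ^ k + 1)) :
    i' = 2 ^ k ∧ j' = 2 ^ (k + 1) := by
  have hp : (2:ℕ) ^ (k + 1) = 2 * 2 ^ k := by rw [pow_succ]; ring
  have hk1 : (1:ℕ) ≤ 2 ^ k := Nat.one_le_two_pow
  -- lengths
  have hlen := congrArg List.length heq
  simp only [List.length_take, List.length_drop, Sn_length] at hlen
  have hj' : j' = i' + 2 ^ k := by omega
  -- element at offset 0
  have e0 := congrArg (fun l => l[0]?) heq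
  simp only [List.getElem?_take, List.getElem?_drop] at e0
  rw [if_pos (by omega), if_pos (by omega)] at e0
  -- element at offset 2^k
  have e1 := congrArg (fun l => l[2 ^ k]?) heq
  simp only [List.getElem?_take, List.getElem?_drop] at e1
  rw [if_pos (by omega), if_pos (by omega)] at e1
  -- pattern endpoints are `true`
  have p0 : (Sn n)[2 ^ k - 1 + 0]? = some true := by
    rw [Sn_getElem?_true_iff n _ (by omega)]
    exact ⟨k, by omega⟩
  have p1 : (Sn n)[2 ^ k - 1 + 2 ^ k]? = some true := by
    rw [Sn_getElem?_true_iff n _ (by omega)]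
    exact ⟨k + 1, by omega⟩
  rw [p0] at e0
  rw [p1] at e1
  rw [Sn_getElem?_true_iff n _ (by omega)] at e0
  rw [Sn_getElem?_true_iff n _ (by omega)] at e1
  obtain ⟨s, hs⟩ := e0
  obtain ⟨t, ht⟩ := e1
  have hi0 : i' = 2 ^ s := by omega
  have : 2 ^ s + 2 ^ k = 2 ^ t := by omega
  have hsk := pow_eq_of_add s k t this
  subst hsk
  constructor
  · omega
  · omega

theorem gamma_Sn_ge (n : ℕ) (hn : 1 ≤ n) :
    (∀ Γ : Finset ℕ, IsAttractor (Sn n) Γ → ((Nat.log 2 n : ℚ) / 2) ≤ Γ.card) ∧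
    ((Nat.log 2 n : ℚ) / 2) ≤ gamma (Sn n) := by
  have main : ∀ Γ : Finset ℕ, IsAttractor (Sn n) Γ → ((Nat.log 2 n : ℚ) / 2) ≤ Γ.card := by
    intro Γ hΓ
    set L := Nat.log 2 n with hL
    have key : ∀ k, ∃ p, k < L → p ∈ Γ ∧ 2 ^ k ≤ p ∧ p ≤ 2 ^ (k + 1) := by
      intro k
      by_cases hk : k < L
      · have hkn : 2 ^ (k + 1) ≤ n :=
          le_trans (Nat.pow_le_pow_right (by norm_num) (by omega))
            (Nat.pow_log_le_self 2 (by omega))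
        obtain ⟨i', j', hi1, hij, hjn, heq, p, hp, hpi, hpj⟩ :=
          hΓ.2 (2 ^ k) (2 ^ (k + 1)) Nat.one_le_two_pow
            (Nat.pow_le_pow_right (by norm_num) (by omega))
            (by rw [Sn_length]; exact hkn)
        obtain ⟨e1, e2⟩ := occ_unique n k i' j' hkn hi1 hij
          (by rwa [Sn_length] at hjn) heq
        exact ⟨p, fun _ => ⟨hp, by omega⟩⟩
      · exact ⟨0, fun h => absurd h hk⟩
    choose f hf using key
    have maps : ∀ k ∈ Finset.range L, f k ∈ Γ :=
      fun k hk => (hf k (Finset.mem_range.mp hk)).1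
    have fib : ∀ p ∈ Γ, ((Finset.range L).filter (fun k => f k = p)).card ≤ 2 := by
      intro p _
      have hsub : (Finset.range L).filter (fun k => f k = p)
          ⊆ {Nat.log 2 p - 1, Nat.log 2 p} := by
        intro k hk
        simp only [Finset.mem_filter, Finset.mem_range] at hk
        obtain ⟨hkL, hfk⟩ := hk
        obtain ⟨-, hle, hge⟩ := hf k hkL
        rw [hfk] at hle hge
        have hp1 : p ≠ 0 := by have := Nat.one_le_two_pow (n := k); omega
        have h1 : k ≤ Nat.log 2 p := (Nat.le_log_iff_pow_le (by norm_num) hp1).mpr hle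
        have h2 : Nat.log 2 p < k + 2 := by
          rw [Nat.log_lt_iff_lt_pow (by norm_num) hp1]
          calc p ≤ 2 ^ (k + 1) := hge
            _ < 2 ^ (k + 2) := Nat.pow_lt_pow_right (by norm_num) (by omega)
        simp only [Finset.mem_insert, Finset.mem_singleton]
        omega
      calc ((Finset.range L).filter (fun k => f k = p)).card
          ≤ ({Nat.log 2 p - 1, Nat.log 2 p} : Finset ℕ).card := Finset.card_le_card hsub
        _ ≤ 2 := by
            apply le_trans (Finset.card_insert_le _ _)
            simp
    have hcount : (Finset.range L).card ≤ 2 * Γ.card :=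
      Finset.card_le_mul_card_image_of_maps_to maps 2 fib
    rw [Finset.card_range] at hcount
    have : (L : ℚ) ≤ 2 * Γ.card := by exact_mod_cast hcount
    linarith
  refine ⟨main, ?_⟩
  have hex : IsAttractor (Sn n) (Finset.Icc 1 n) := by
    constructor
    · intro p hp
      rw [Sn_length]
      exact Finset.mem_Icc.mp hp
    · intro i j hi hij hj
      refine ⟨i, j, hi, hij, hj, rfl, i, ?_, le_refl i, hij⟩
      rw [Sn_length] at hj
      exact Finset.mem_Icc.mpr ⟨hi, le_trans hij hj⟩
  have hne : { m | ∃ Γ : Finset ℕ, IsAttractor (Sn n) Γ ∧ Γ.card = m }.Nonempty :=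
    ⟨(Finset.Icc 1 n).card, Finset.Icc 1 n, hex, rfl⟩
  obtain ⟨Γ, hΓ, hcard⟩ := Nat.sInf_mem hne
  rw [gamma, ← hcard]
  exact main Γ hΓ
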